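/- Let E be a complete real inner product space and let f : E → ℝ be 1-Lipschitz and differentiable at x ∈ E. Suppose there exists y ∈ E with y ≠ x such that f(x) ≥ 0, f(y) ≤ 0, and f(x) - f(y) = ‖x - y‖. Then the point x_δ = x - f(x) • ∇f(x) satisfies f(x_δ) = 0, where ∇f(x) denotes the gradient of f at x. -/

import Mathlib

open RealInnerProductSpace

/-- Proposition 2 (decision boundary, pointwise form): if `x` is joined by a
transport ray to a negative point `y`, then `x - f x • ∇f(x)` lies on the
decision boundary `{z | f z = 0}`. -/
theorem otnn_boundary_point {E : Type*} [NormedAddCommGroup E]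
    [InnerProductSpace ℝ E] [CompleteSpace E]
    (f : E → ℝ) (hf : LipschitzWith 1 f) (x : E) (hdiff : DifferentiableAt ℝ f x)
    (h : ∃ y : E, y ≠ x ∧ 0 ≤ f x ∧ f y ≤ 0 ∧ f x - f y = ‖x - y‖) :
    f (x - f x • gradient f x) = 0 := by
  obtain ⟨y, hyx, hfx, hfy, heq⟩ := h
  set d : ℝ := ‖x - y‖ with hd_def
  have hd : 0 < d := by
    simpa [hd_def, sub_ne_zero] using (sub_ne_zero.mpr hyx.symm)
  set u : E := d⁻¹ • (x - y) with hu_def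
  have hu : ‖u‖ = 1 := by
    rw [hu_def, norm_smul, norm_inv, Real.norm_eq_abs, abs_of_pos hd, ← hd_def]
    field_simp
  -- key: f decreases at unit rate along the ray
  have key : ∀ t : ℝ, 0 ≤ t → t ≤ d → f (x - t • u) = f x - t := by
    intro t ht htd
    have hdist1 : dist x (x - t • u) = t := by
      rw [dist_eq_norm]
      simp [norm_smul, abs_of_nonneg ht, hu]
    have h1 : f x - f (x - t • u) ≤ t := by
      have hL := hf.dist_le_mul x (x - t • u)
      rw [hdist1] at hL
      calc f x - f (x - t • u) ≤ |f x - f (x - t • u)| := le_abs_self _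
        _ = dist (f x) (f (x - t • u)) := (Real.dist_eq _ _).symm
        _ ≤ t := by simpa using hL
    have hz : x - t • u - y = (1 - t / d) • (x - y) := by
      rw [hu_def, smul_smul, sub_smul, one_smul]
      have : t * d⁻¹ = t / d := by ring
      rw [this]
      abel
    have hdist2 : dist (x - t • u) y = d - t := by
      rw [dist_eq_norm, hz, norm_smul, Real.norm_eq_abs, ← hd_def,
        abs_of_nonneg (by rw [sub_nonneg, div_le_one hd]; exact htd)]
      field_simp
    have h2 : f (x - t • u) - f y ≤ d - t := by
      have hL := hf.dist_le_mul (x - t • u) y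
      rw [hdist2] at hL
      calc f (x - t • u) - f y ≤ |f (x - t • u) - f y| := le_abs_self _
        _ = dist (f (x - t • u)) (f y) := (Real.dist_eq _ _).symm
        _ ≤ d - t := by simpa using hL
    linarith
  -- gradient equals u
  have hF : HasFDerivAt f (InnerProductSpace.toDual ℝ E (gradient f x)) x :=
    (hdiff.hasGradientAt).hasFDerivAt
  have hφ : HasDerivAt (fun t : ℝ => x - t • u) (-u) 0 := by
    simpa using ((hasDerivAt_id (0 : ℝ)).smul_const u).const_sub x
  have hc : HasDerivAt (fun t : ℝ => f (x - t • u))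
      (InnerProductSpace.toDual ℝ E (gradient f x) (-u)) 0 := by
    have hF' : HasFDerivAt f (InnerProductSpace.toDual ℝ E (gradient f x))
        ((fun t : ℝ => x - t • u) 0) := by simpa using hF
    exact hF'.comp_hasDerivAt 0 hφ
  have hconst : HasDerivWithinAt (fun t : ℝ => f (x - t • u)) (-1) (Set.Icc 0 d) 0 := by
    have hlin : HasDerivWithinAt (fun t : ℝ => f x - t) (-1) (Set.Icc 0 d) 0 := by
      simpa using ((hasDerivAt_id (0:ℝ)).const_sub (f x)).hasDerivWithinAt
    refine hlin.congr (fun t ht => ?_) ?_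
    · exact key t ht.1 ht.2
    · simp [key 0 le_rfl hd.le]
  have hud : UniqueDiffWithinAt ℝ (Set.Icc (0:ℝ) d) 0 :=
    (uniqueDiffOn_Icc hd) 0 ⟨le_rfl, hd.le⟩
  have hder : InnerProductSpace.toDual ℝ E (gradient f x) (-u) = -1 := by
    have e1 := (hc.hasDerivWithinAt (s := Set.Icc 0 d)).derivWithin hud
    have e2 := hconst.derivWithin hud
    rw [e1] at e2; exact e2
  have hinner : (inner ℝ (gradient f x) u : ℝ) = 1 := by
    rw [InnerProductSpace.toDual_apply_apply, inner_neg_right] at hder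
    linarith
  have hgnorm : ‖gradient f x‖ ≤ 1 := by
    have h1 : ‖fderiv ℝ f x‖ ≤ ((1 : NNReal) : ℝ) := norm_fderiv_le_of_lipschitz ℝ hf
    have h2 : ‖gradient f x‖ = ‖fderiv ℝ f x‖ := by
      rw [gradient]; exact LinearIsometryEquiv.norm_map _ _
    rw [h2]; simpa using h1
  have hgu : gradient f x = u := by
    have hsq : ‖gradient f x - u‖ ^ 2 ≤ 0 := by
      rw [norm_sub_sq_real, hinner, hu]
      nlinarith [norm_nonneg (gradient f x)]
    have h0 : ‖gradient f x - u‖ = 0 := by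
      nlinarith [norm_nonneg (gradient f x - u)]
    exact sub_eq_zero.mp (norm_eq_zero.mp h0)
  rw [hgu, key (f x) hfx (by linarith), sub_self]
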